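/- Let $U_s \subseteq 2^{<\omega}$ for $s \in \mathbb{N}$ be a sequence of sets of binary strings with $U_0 = \emptyset$ satisfying: (a) if $\tau \in U_s \setminus U_{s+1}$ then there exists $\sigma \prec \tau$ with $\sigma \in U_{s+1} \setminus U_s$; and (b) for every string $\sigma$ and every $s$, if $\mathrm{wt}(\sigma^{\prec} \cap U_s) > 2^{-|\sigma|}$ then $\sigma \in U_s$. Then the weights are monotone: $\mathrm{wt}(U_s) \le \mathrm{wt}(U_{s+1})$ for all $s$, provided at each step the set of strings entering $U_{s+1}\setminus U_s$ has a (prefix-)minimal element above every removed string. More precisely: if $\sigma$ is prefix-minimal in $U_{s+1} \setminus U_s$, then the total weight of strings in $(U_s \setminus U_{s+1}) \cap \sigma^{\prec}$ is at most $2^{-|\sigma|}$. -/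

import Mathlib

open scoped ENNReal

/-- The weight of a set of binary strings: `wt(X) = ∑_{σ ∈ X} 2^{-|σ|}`. -/
noncomputable def wt (X : Set (List Bool)) : ℝ≥0∞ :=
  ∑' σ : X, (2 : ℝ≥0∞) ^ (-((σ : List Bool).length : ℤ))

lemma wt_mono {X Y : Set (List Bool)} (h : X ⊆ Y) : wt X ≤ wt Y := by
  unfold wt; exact ENNReal.tsum_mono_subtype (fun σ : List Bool => (2 : ℝ≥0∞) ^ (-(σ.length : ℤ))) h

/-- Weight monotonicity for Madison tests: under conditions (a) and (b), the weights
`wt(U_s)` are nondecreasing in `s`; more precisely, if `σ` is prefix-minimal in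
`U_{s+1} \ U_s`, then the weight of the removed strings above `σ` is at most `2^{-|σ|}`. -/
theorem madison_weight_monotone (U : ℕ → Set (List Bool)) (h0 : U 0 = ∅)
    (ha : ∀ s τ, τ ∈ U s → τ ∉ U (s+1) →
      ∃ σ, σ <+: τ ∧ σ ≠ τ ∧ σ ∈ U (s+1) ∧ σ ∉ U s)
    (hb : ∀ s σ, (2 : ℝ≥0∞) ^ (-(σ.length : ℤ)) <
        wt {τ | (σ <+: τ ∧ σ ≠ τ) ∧ τ ∈ U s} → σ ∈ U s) :
    (∀ s, wt (U s) ≤ wt (U (s+1))) ∧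
    (∀ s σ, σ ∈ U (s+1) → σ ∉ U s →
      (∀ σ', σ' ∈ U (s+1) → σ' ∉ U s → σ' <+: σ → σ' = σ) →
      wt ((U s \ U (s+1)) ∩ {τ | σ <+: τ ∧ σ ≠ τ}) ≤ (2 : ℝ≥0∞) ^ (-(σ.length : ℤ))) := by
  -- contrapositive of (b)
  have hb' : ∀ s σ, σ ∉ U s →
      wt {τ | (σ <+: τ ∧ σ ≠ τ) ∧ τ ∈ U s} ≤ (2 : ℝ≥0∞) ^ (-(σ.length : ℤ)) := by
    intro s σ hσ
    by_contra h
    exact hσ (hb s σ (lt_of_not_ge h))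
  have part2 : ∀ s σ, σ ∉ U s →
      wt ((U s \ U (s+1)) ∩ {τ | σ <+: τ ∧ σ ≠ τ}) ≤ (2 : ℝ≥0∞) ^ (-(σ.length : ℤ)) := by
    intro s σ hσ
    refine le_trans (wt_mono ?_) (hb' s σ hσ)
    rintro τ ⟨⟨h1, _⟩, h2⟩
    exact ⟨h2, h1⟩
  refine ⟨?_, fun s σ h1 h2 _ => part2 s σ h2⟩
  intro s
  classical
  set M : Set (List Bool) :=
    {σ | σ ∈ U (s+1) ∧ σ ∉ U s ∧ ∀ σ', σ' ∈ U (s+1) → σ' ∉ U s → σ' <+: σ → σ' = σ} with hM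
  -- every entering string has a minimal entering prefix
  have hmin : ∀ n (σ0 : List Bool), σ0.length < n → σ0 ∈ U (s+1) → σ0 ∉ U s →
      ∃ σ ∈ M, σ <+: σ0 := by
    intro n
    induction n with
    | zero => intro σ0 h; exact absurd h (Nat.not_lt_zero _)
    | succ n ih =>
      intro σ0 hlen hin hout
      by_cases hm : σ0 ∈ M
      · exact ⟨σ0, hm, List.prefix_refl _⟩
      · simp only [hM, Set.mem_setOf_eq] at hm
        push_neg at hm
        obtain ⟨σ', hσ'in, hσ'out, hpre, hne⟩ := hm hin hout
        have hlt : σ'.length < σ0.length := by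
          rcases lt_or_eq_of_le hpre.length_le with h | h
          · exact h
          · exact absurd (List.IsPrefix.eq_of_length hpre h) hne
        obtain ⟨σ, hσM, hσpre⟩ := ih σ' (by omega) hσ'in hσ'out
        exact ⟨σ, hσM, hσpre.trans hpre⟩
  -- removed strings lie above minimal entering strings
  set t : List Bool → Set (List Bool) :=
    fun σ => (U s \ U (s+1)) ∩ {τ | σ <+: τ ∧ σ ≠ τ} with ht
  have hcover : U s \ U (s+1) ⊆ ⋃ σ ∈ M, t σ := by
    rintro τ ⟨hin, hout⟩
    obtain ⟨σ1, hpre1, hne1, h1in, h1out⟩ := ha s τ hin hout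
    obtain ⟨σ, hσM, hσpre⟩ := hmin (σ1.length + 1) σ1 (Nat.lt_succ_self _) h1in h1out
    have hlt1 : σ1.length < τ.length := by
      rcases lt_or_eq_of_le hpre1.length_le with h | h
      · exact h
      · exact absurd (List.IsPrefix.eq_of_length hpre1 h) hne1
    refine Set.mem_biUnion hσM ⟨⟨hin, hout⟩, hσpre.trans hpre1, ?_⟩
    intro h
    subst h
    have := hσpre.length_le
    omega
  have hdecomp : U s ⊆ (U s ∩ U (s+1)) ∪ (U s \ U (s+1)) := by
    intro τ hτ
    by_cases h : τ ∈ U (s+1)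
    · exact Or.inl ⟨hτ, h⟩
    · exact Or.inr ⟨hτ, h⟩
  calc wt (U s) ≤ wt ((U s ∩ U (s+1)) ∪ (U s \ U (s+1))) := wt_mono hdecomp
    _ ≤ wt (U s ∩ U (s+1)) + wt (U s \ U (s+1)) := by
        unfold wt; exact ENNReal.tsum_union_le (fun σ : List Bool => (2 : ℝ≥0∞) ^ (-(σ.length : ℤ))) _ _
    _ ≤ wt (U s ∩ U (s+1)) + wt (U (s+1) \ U s) := by
        gcongr
        calc wt (U s \ U (s+1)) ≤ wt (⋃ σ ∈ M, t σ) := wt_mono hcover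
          _ ≤ ∑' σ : M, wt (t σ) := by
              unfold wt; exact ENNReal.tsum_biUnion_le_tsum (fun σ : List Bool => (2 : ℝ≥0∞) ^ (-(σ.length : ℤ))) _ _
          _ ≤ ∑' σ : M, (2 : ℝ≥0∞) ^ (-((σ : List Bool).length : ℤ)) := by
              refine ENNReal.tsum_le_tsum fun ⟨σ, hσ⟩ => ?_
              exact part2 s σ hσ.2.1
          _ = wt M := rfl
          _ ≤ wt (U (s+1) \ U s) := wt_mono fun σ hσ => ⟨hσ.1, hσ.2.1⟩
    _ = wt ((U s ∩ U (s+1)) ∪ (U (s+1) \ U s)) := by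
        unfold wt
        refine (Summable.tsum_union_disjoint (f := (fun σ : List Bool => (2 : ℝ≥0∞) ^ (-(σ.length : ℤ)))) ?_ ENNReal.summable ENNReal.summable).symm
        rw [Set.disjoint_left]
        rintro τ ⟨h1, _⟩ ⟨_, h2⟩
        exact h2 h1
    _ = wt (U (s+1)) := by
        congr 1
        rw [Set.inter_comm, Set.inter_union_diff]
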